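/- arXiv:1906.03830 — 4 statements merged into one kernel-verified Lean document; each statement's English description precedes it below -/
import Mathlib

section
/- Fundamental identity of SMD: if w_i satisfies ∇ψ(w_i) = ∇ψ(w_{i-1}) - η ∇L_i(w_{i-1}), then for any w with L_i(w) = 0, it holds that D_ψ(w, w_{i-1}) = D_ψ(w, w_i) + D_{ψ - ηL_i}(w_i, w_{i-1}) + η L_i(w_i) + η D_{L_i}(w, w_{i-1}). -/
open scoped RealInnerProductSpace

lemma gradient_sub_const_smul {F : Type*} [NormedAddCommGroup F] [InnerProductSpace ℝ F]
    [CompleteSpace F] (f g : F → ℝ) (c : ℝ) (x : F)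
    (hf : DifferentiableAt ℝ f x) (hg : DifferentiableAt ℝ g x) :
    gradient (fun u => f u - c * g u) x = gradient f x - c • gradient g x := by
  have h1 : HasGradientAt f (gradient f x) x := hf.hasGradientAt
  have h2 : HasGradientAt g (gradient g x) x := hg.hasGradientAt
  have h1' := h1.hasFDerivAt
  have h2' := h2.hasFDerivAt
  have h3 : HasFDerivAt (fun u => f u - c * g u)
      (InnerProductSpace.toDual ℝ F (gradient f x) -
        c • InnerProductSpace.toDual ℝ F (gradient g x)) x := by
    exact h1'.sub (h2'.const_mul c)
  have h4 : HasGradientAt (fun u => f u - c * g u) (gradient f x - c • gradient g x) x := by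
    rw [hasGradientAt_iff_hasFDerivAt]
    convert h3 using 1
    · rfl
    · simp [map_sub, map_smul]
  exact h4.gradient

theorem smd_fundamental_identity
    (p : ℕ) (ψ L : EuclideanSpace ℝ (Fin p) → ℝ)
    (hψ : Differentiable ℝ ψ) (hL : Differentiable ℝ L)
    (hLnonneg : ∀ u, 0 ≤ L u)
    (η : ℝ) (hη : 0 < η)
    (wprev wi w : EuclideanSpace ℝ (Fin p))
    (hupdate : gradient ψ wi = gradient ψ wprev - η • gradient L wprev)
    (hw : L w = 0) :
    ψ w - ψ wprev - ⟪gradient ψ wprev, w - wprev⟫ =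
      (ψ w - ψ wi - ⟪gradient ψ wi, w - wi⟫)
      + ((ψ wi - η * L wi) - (ψ wprev - η * L wprev)
          - ⟪gradient (fun u => ψ u - η * L u) wprev, wi - wprev⟫)
      + η * L wi
      + η * (L w - L wprev - ⟪gradient L wprev, w - wprev⟫) := by
  rw [gradient_sub_const_smul ψ L η wprev (hψ wprev) (hL wprev), ← hupdate, hw, hupdate]
  simp only [inner_sub_left, inner_sub_right, inner_smul_left, real_inner_comm, starRingEnd_apply, star_trivial]
  push_cast
  ring
end

section
/- One-step descent in Bregman divergence: under the SMD update ∇ψ(w_i) = ∇ψ(w_{i-1}) - η∇L_i(w_{i-1}), if ψ - ηL_i is convex, L_i is nonnegative, L_i(w) = 0, and D_{L_i}(w, w_{i-1}) ≥ 0, then D_ψ(w, w_i) ≤ D_ψ(w, w_{i-1}). -/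
open scoped RealInnerProductSpace

lemma convex_fderiv_le {n : ℕ} (F : EuclideanSpace ℝ (Fin n) → ℝ)
    (hF : Differentiable ℝ F) (hc : ConvexOn ℝ Set.univ F)
    (x y : EuclideanSpace ℝ (Fin n)) :
    F x + fderiv ℝ F x (y - x) ≤ F y := by
  set g : ℝ → ℝ := fun t => F (AffineMap.lineMap x y t) with hg
  have hgc : ConvexOn ℝ Set.univ g := by
    have := hc.comp_affineMap (AffineMap.lineMap x y)
    rw [Set.preimage_univ] at this
    exact this
  have hline : ∀ t : ℝ, HasDerivAt (fun s : ℝ => AffineMap.lineMap x y s)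
      (y - x) t := by
    intro t
    have heq : (fun s : ℝ => AffineMap.lineMap x y s)
        = fun s : ℝ => s • (y - x) + x := by
      funext s; simp [AffineMap.lineMap_apply_module']
    rw [heq]
    simpa using (((hasDerivAt_id t).smul_const (y - x)).add_const x)
  have hg0 : HasDerivAt g (fderiv ℝ F x (y - x)) 0 := by
    have h1 : HasFDerivAt F (fderiv ℝ F x) (AffineMap.lineMap x y (0:ℝ)) := by
      simpa using (hF x).hasFDerivAt
    exact h1.comp_hasDerivAt 0 (hline 0)
  have := hgc.le_slope_of_hasDerivAt (Set.mem_univ 0) (Set.mem_univ 1) zero_lt_one hg0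
  have hslope : slope g 0 1 = F y - F x := by
    simp [slope_def_field, g]
  rw [hslope] at this
  linarith

lemma fderiv_eq_inner {n : ℕ} (F : EuclideanSpace ℝ (Fin n) → ℝ)
    (hF : Differentiable ℝ F) (x v : EuclideanSpace ℝ (Fin n)) :
    fderiv ℝ F x v = ⟪gradient F x, v⟫ := by
  have h := (hF x).hasGradientAt.hasFDerivAt
  rw [h.fderiv]
  simp [InnerProductSpace.toDual_apply_apply]

theorem smd_one_step_descent
    (p : ℕ) (ψ L : EuclideanSpace ℝ (Fin p) → ℝ)
    (hψ : Differentiable ℝ ψ) (hL : Differentiable ℝ L)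
    (hLnonneg : ∀ u, 0 ≤ L u)
    (η : ℝ) (hη : 0 < η)
    (hconv : ConvexOn ℝ Set.univ (fun u => ψ u - η * L u))
    (wprev wi w : EuclideanSpace ℝ (Fin p))
    (hupdate : gradient ψ wi = gradient ψ wprev - η • gradient L wprev)
    (hw : L w = 0)
    (hDL : 0 ≤ L w - L wprev - ⟪gradient L wprev, w - wprev⟫) :
    ψ w - ψ wi - ⟪gradient ψ wi, w - wi⟫ ≤
      ψ w - ψ wprev - ⟪gradient ψ wprev, w - wprev⟫ := by
  set F : EuclideanSpace ℝ (Fin p) → ℝ := fun u => ψ u - η * L u with hF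
  have hFdiff : Differentiable ℝ F := hψ.sub (hL.const_mul η)
  have key := convex_fderiv_le F hFdiff hconv wprev wi
  have hfd : fderiv ℝ F wprev (wi - wprev)
      = ⟪gradient ψ wprev, wi - wprev⟫ - η * ⟪gradient L wprev, wi - wprev⟫ := by
    have hFd : HasFDerivAt F (fderiv ℝ ψ wprev - η • fderiv ℝ L wprev) wprev :=
      (hψ wprev).hasFDerivAt.sub ((hL wprev).hasFDerivAt.const_mul η)
    rw [hFd.fderiv]
    simp only [ContinuousLinearMap.sub_apply, ContinuousLinearMap.smul_apply, smul_eq_mul,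
      fderiv_eq_inner ψ hψ, fderiv_eq_inner L hL]
  rw [hfd] at key
  simp only [hF] at key
  have hsplit : ∀ g : EuclideanSpace ℝ (Fin p),
      ⟪g, w - wprev⟫ = ⟪g, w - wi⟫ + ⟪g, wi - wprev⟫ := by
    intro g
    rw [← inner_add_right]
    congr 1
    abel
  rw [hupdate, hsplit (gradient ψ wprev), hsplit (gradient L wprev)] at *
  simp only [inner_sub_left, real_inner_smul_left] at *
  have hLw := hLnonneg wi
  nlinarith [mul_le_mul_of_nonneg_left hDL hη.le, mul_nonneg hη.le (hLnonneg wi)]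
end

section
/- Invariance of the Bregman ball under SMD: let B = {w' : D_ψ(w, w') ≤ ε}, suppose D_{L_i}(w, w') ≥ 0 for all w' ∈ B and all i, L_i(w) = 0, L_i ≥ 0, and ψ - ηL_i is convex for all i. If w_0 ∈ B, then every SMD iterate w_k (defined by ∇ψ(w_k) = ∇ψ(w_{k-1}) - η∇L_{i_k}(w_{k-1})) remains in B. -/
open scoped RealInnerProductSpace

lemma convex_grad_ineq {F : Type*} [NormedAddCommGroup F] [InnerProductSpace ℝ F]
    [CompleteSpace F] {φ : F → ℝ} {g x : F} (y : F)
    (hc : ConvexOn ℝ Set.univ φ) (hd : HasGradientAt φ g x) :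
    ⟪g, y - x⟫ ≤ φ y - φ x := by
  have hfd : HasFDerivAt φ (InnerProductSpace.toDual ℝ F g) x :=
    hasGradientAt_iff_hasFDerivAt.mp hd
  set c : ℝ →ᵃ[ℝ] F := AffineMap.lineMap x y with hcdef
  have hg : ConvexOn ℝ Set.univ (φ ∘ c) := by
    simpa using hc.comp_affineMap c
  have hcd : HasDerivAt (fun t : ℝ => c t) (y - x) 0 := by
    have : HasDerivAt (fun t : ℝ => t • (y - x) + x) ((1:ℝ) • (y - x)) 0 :=
      ((hasDerivAt_id (0:ℝ)).smul_const (y - x)).add_const x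
    simpa [hcdef, AffineMap.lineMap_apply, vsub_eq_sub, vadd_eq_add] using this
  have hc0 : c 0 = x := by simp [hcdef, AffineMap.lineMap_apply]
  have hc1 : c 1 = y := by simp [hcdef, AffineMap.lineMap_apply]
  have hcomp : HasDerivAt (φ ∘ c) ⟪g, y - x⟫ 0 := by
    have hfd' : HasFDerivAt φ (InnerProductSpace.toDual ℝ F g) (c 0) := hc0 ▸ hfd
    have := hfd'.comp_hasDerivAt 0 hcd
    simpa [InnerProductSpace.toDual_apply_apply] using this
  have hslope := hg.le_slope_of_hasDerivAt (Set.mem_univ 0) (Set.mem_univ 1) one_pos hcomp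
  simpa [slope_def_field, hc0, hc1] using hslope

lemma hasGradientAt_sub_const_mul {F : Type*} [NormedAddCommGroup F] [InnerProductSpace ℝ F]
    [CompleteSpace F] {ψ L : F → ℝ} {gψ gL x : F} (η : ℝ)
    (h1 : HasGradientAt ψ gψ x) (h2 : HasGradientAt L gL x) :
    HasGradientAt (fun u => ψ u - η * L u) (gψ - η • gL) x := by
  rw [hasGradientAt_iff_hasFDerivAt] at *
  simpa only [map_sub, map_smul, Pi.sub_def] using h1.sub (h2.const_mul η)

theorem smd_iterates_remain_in_ball
    (p n : ℕ) (ψ : EuclideanSpace ℝ (Fin p) → ℝ)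
    (L : Fin n → EuclideanSpace ℝ (Fin p) → ℝ)
    (hψ : Differentiable ℝ ψ)
    (hψconv : StrictConvexOn ℝ Set.univ ψ)
    (hL : ∀ i, Differentiable ℝ (L i))
    (hLnonneg : ∀ i u, 0 ≤ L i u)
    (w : EuclideanSpace ℝ (Fin p))
    (hw : ∀ i, L i w = 0)
    (ε η : ℝ) (hε : 0 < ε) (hη : 0 < η)
    (hconv : ∀ i, ConvexOn ℝ Set.univ (fun u => ψ u - η * L i u))
    (B : Set (EuclideanSpace ℝ (Fin p)))
    (hB : B = {w' | ψ w - ψ w' - ⟪gradient ψ w', w - w'⟫ ≤ ε})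
    (hDL : ∀ i, ∀ w' ∈ B, 0 ≤ L i w - L i w' - ⟪gradient (L i) w', w - w'⟫)
    (idx : ℕ → Fin n)
    (iter : ℕ → EuclideanSpace ℝ (Fin p))
    (hupdate : ∀ k : ℕ, gradient ψ (iter (k + 1)) =
      gradient ψ (iter k) - η • gradient (L (idx k)) (iter k))
    (h0 : iter 0 ∈ B) :
    ∀ k : ℕ, iter k ∈ B := by
  intro k
  induction k with
  | zero => exact h0
  | succ k ih =>
    set a := iter k with ha
    set b := iter (k + 1) with hb
    set i := idx k with hi
    -- loss gradient facts
    have h2 := hDL i a ih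
    rw [hw i] at h2
    have h2' : L i a + ⟪gradient (L i) a, w - a⟫ ≤ 0 := by linarith
    have h3 := hLnonneg i b
    -- gradient of the combined convex function
    have hφgrad : HasGradientAt (fun u => ψ u - η * L i u)
        (gradient ψ a - η • gradient (L i) a) a :=
      hasGradientAt_sub_const_mul η (hψ a).hasGradientAt ((hL i) a).hasGradientAt
    have h1 := convex_grad_ineq b (hconv i) hφgrad
    have e2 : ⟪gradient ψ a - η • gradient (L i) a, b - a⟫
        = ⟪gradient ψ a, b - a⟫ - η * ⟪gradient (L i) a, b - a⟫ := by
      rw [inner_sub_left, real_inner_smul_left]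
    rw [e2] at h1
    have ih' : ψ w - ψ a - ⟪gradient ψ a, w - a⟫ ≤ ε := by rw [hB] at ih; exact ih
    rw [hB, Set.mem_setOf_eq, hupdate k]
    have e1 : ⟪gradient ψ a - η • gradient (L i) a, w - b⟫
        = ⟪gradient ψ a, w - a⟫ - ⟪gradient ψ a, b - a⟫
          - η * ⟪gradient (L i) a, w - a⟫ + η * ⟪gradient (L i) a, b - a⟫ := by
      simp only [show w - b = (w - a) - (b - a) by abel, inner_sub_left,
        real_inner_smul_left, inner_sub_right]
      ring
    rw [← hi, e1]
    have p1 : 0 ≤ η * L i b := mul_nonneg hη.le h3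
    have p2 : η * L i a + η * ⟪gradient (L i) a, w - a⟫ ≤ 0 := by nlinarith
    linarith
end

section
/- Telescoping bound for SMD: under the assumptions that all iterates remain in the region where D_{L_i}(w, ·) ≥ 0, L_i(w) = 0 for all i, and ψ - ηL_i convex for all i, the sum Σ_{k=1}^T [D_{ψ-ηL_{i_k}}(w_k, w_{k-1}) + η L_{i_k}(w_k) + η D_{L_{i_k}}(w, w_{k-1})] is bounded above by D_ψ(w, w_0) for every T; in particular each of the three (nonnegative) summand series converges. -/
open scoped RealInnerProductSpace

lemma inner_gradient_eq_fderiv {p : ℕ} (f : EuclideanSpace ℝ (Fin p) → ℝ)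
    (x v : EuclideanSpace ℝ (Fin p)) :
    ⟪gradient f x, v⟫ = fderiv ℝ f x v := by
  rw [gradient, ← InnerProductSpace.toDual_apply_apply, LinearIsometryEquiv.apply_symm_apply]

lemma bregman_nonneg {p : ℕ} {f : EuclideanSpace ℝ (Fin p) → ℝ}
    (hf : Differentiable ℝ f) (hconv : ConvexOn ℝ Set.univ f)
    (x y : EuclideanSpace ℝ (Fin p)) :
    0 ≤ f y - f x - ⟪gradient f x, y - x⟫ := by
  have key : fderiv ℝ f x (y - x) ≤ f y - f x := by
    set g : ℝ → ℝ := fun t => f (x + t • (y - x)) with hg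
    have hgc : ConvexOn ℝ Set.univ g := by
      have := hconv.comp_affineMap (AffineMap.lineMap x y : ℝ →ᵃ[ℝ] _)
      have heq : g = f ∘ (AffineMap.lineMap x y : ℝ →ᵃ[ℝ] _) := by
        funext t
        simp [g, AffineMap.lineMap_apply_module]
        congr 1
        module
      rw [heq]
      simpa using this
    have hcurve : ∀ t : ℝ, HasDerivAt (fun t : ℝ => x + t • (y - x)) (y - x) t := by
      intro t
      simpa using ((hasDerivAt_id t).smul_const (y - x)).const_add x
    have hgd : HasDerivAt g (fderiv ℝ f x (y - x)) 0 := by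
      have := ((hf (x + (0:ℝ) • (y - x))).hasFDerivAt.comp_hasDerivAt 0 (hcurve 0))
      simp only [zero_smul, add_zero] at this
      exact this
    have := hgc.le_slope_of_hasDerivAt (Set.mem_univ (0:ℝ)) (Set.mem_univ (1:ℝ))
      one_pos hgd
    simpa [slope, g] using this
  rw [inner_gradient_eq_fderiv]
  linarith

theorem smd_telescoping_bound
    (p n : ℕ) (ψ : EuclideanSpace ℝ (Fin p) → ℝ)
    (L : Fin n → EuclideanSpace ℝ (Fin p) → ℝ)
    (hψ : Differentiable ℝ ψ)
    (hψconv : StrictConvexOn ℝ Set.univ ψ)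
    (hL : ∀ i, Differentiable ℝ (L i))
    (hLnonneg : ∀ i u, 0 ≤ L i u)
    (w : EuclideanSpace ℝ (Fin p))
    (hw : ∀ i, L i w = 0)
    (η : ℝ) (hη : 0 < η)
    (hconv : ∀ i, ConvexOn ℝ Set.univ (fun u => ψ u - η * L i u))
    (idx : ℕ → Fin n)
    (iter : ℕ → EuclideanSpace ℝ (Fin p))
    (hupdate : ∀ k : ℕ, gradient ψ (iter (k + 1)) =
      gradient ψ (iter k) - η • gradient (L (idx k)) (iter k))
    (hDL : ∀ k : ℕ,
      0 ≤ L (idx k) w - L (idx k) (iter k)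
          - ⟪gradient (L (idx k)) (iter k), w - iter k⟫) :
    (∀ T : ℕ,
      (∑ k ∈ Finset.range T,
        (((ψ (iter (k + 1)) - η * L (idx k) (iter (k + 1)))
            - (ψ (iter k) - η * L (idx k) (iter k))
            - ⟪gradient (fun u => ψ u - η * L (idx k) u) (iter k),
                iter (k + 1) - iter k⟫)
          + η * L (idx k) (iter (k + 1))
          + η * (L (idx k) w - L (idx k) (iter k)
              - ⟪gradient (L (idx k)) (iter k), w - iter k⟫)))
        ≤ ψ w - ψ (iter 0) - ⟪gradient ψ (iter 0), w - iter 0⟫) ∧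
    Summable (fun k : ℕ =>
      (ψ (iter (k + 1)) - η * L (idx k) (iter (k + 1)))
        - (ψ (iter k) - η * L (idx k) (iter k))
        - ⟪gradient (fun u => ψ u - η * L (idx k) u) (iter k),
            iter (k + 1) - iter k⟫) ∧
    Summable (fun k : ℕ => η * L (idx k) (iter (k + 1))) ∧
    Summable (fun k : ℕ =>
      η * (L (idx k) w - L (idx k) (iter k)
          - ⟪gradient (L (idx k)) (iter k), w - iter k⟫)) := by
  -- gradient of combination
  have hgradcomb : ∀ (i : Fin n) (x v : EuclideanSpace ℝ (Fin p)),
      ⟪gradient (fun u => ψ u - η * L i u) x, v⟫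
        = ⟪gradient ψ x, v⟫ - η * ⟪gradient (L i) x, v⟫ := by
    intro i x v
    rw [inner_gradient_eq_fderiv, inner_gradient_eq_fderiv, inner_gradient_eq_fderiv]
    have : fderiv ℝ (fun u => ψ u - η * L i u) x
        = fderiv ℝ ψ x - η • fderiv ℝ (L i) x := by
      rw [fderiv_fun_sub (hψ x) (by exact ((hL i x).const_mul η)),
        fderiv_const_mul (hL i x)]
    rw [this]
    simp
  set Dψ : ℕ → ℝ := fun k => ψ w - ψ (iter k) - ⟪gradient ψ (iter k), w - iter k⟫ with hDψ
  set S : ℕ → ℝ := fun k =>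
      (((ψ (iter (k + 1)) - η * L (idx k) (iter (k + 1)))
            - (ψ (iter k) - η * L (idx k) (iter k))
            - ⟪gradient (fun u => ψ u - η * L (idx k) u) (iter k),
                iter (k + 1) - iter k⟫)
          + η * L (idx k) (iter (k + 1))
          + η * (L (idx k) w - L (idx k) (iter k)
              - ⟪gradient (L (idx k)) (iter k), w - iter k⟫)) with hS
  -- key identity
  have hkey : ∀ k, S k = Dψ k - Dψ (k + 1) := by
    intro k
    simp only [hS, hDψ]
    rw [hgradcomb, hupdate k, hw]
    simp only [inner_sub_left, inner_sub_right, real_inner_smul_left]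
    ring
  -- partial sums
  have hsum : ∀ T, ∑ k ∈ Finset.range T, S k = Dψ 0 - Dψ T := by
    intro T
    have := Finset.sum_range_sub' Dψ T
    calc ∑ k ∈ Finset.range T, S k = ∑ k ∈ Finset.range T, (Dψ k - Dψ (k+1)) := by
          exact Finset.sum_congr rfl fun k _ => hkey k
      _ = Dψ 0 - Dψ T := Finset.sum_range_sub' Dψ T
  have hDψnonneg : ∀ k, 0 ≤ Dψ k := fun k =>
    bregman_nonneg hψ hψconv.convexOn (iter k) w
  have hbound : ∀ T, ∑ k ∈ Finset.range T, S k ≤ Dψ 0 := by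
    intro T; rw [hsum T]; linarith [hDψnonneg T]
  -- nonnegativity of the three pieces
  have h1 : ∀ k, 0 ≤ (ψ (iter (k + 1)) - η * L (idx k) (iter (k + 1)))
        - (ψ (iter k) - η * L (idx k) (iter k))
        - ⟪gradient (fun u => ψ u - η * L (idx k) u) (iter k),
            iter (k + 1) - iter k⟫ := by
    intro k
    exact bregman_nonneg (fun x => ((hψ x).sub ((hL (idx k) x).const_mul η)))
      (hconv (idx k)) (iter k) (iter (k+1))
  have h2 : ∀ k : ℕ, (0:ℝ) ≤ η * L (idx k) (iter (k + 1)) := fun k =>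
    mul_nonneg hη.le (hLnonneg _ _)
  have h3 : ∀ k : ℕ, (0:ℝ) ≤ η * (L (idx k) w - L (idx k) (iter k)
      - ⟪gradient (L (idx k)) (iter k), w - iter k⟫) := fun k =>
    mul_nonneg hη.le (hDL k)
  have hSnn : ∀ k, 0 ≤ S k := fun k => by
    have := h1 k; have := h2 k; have := h3 k
    simp only [hS]; linarith
  refine ⟨hbound, ?_, ?_, ?_⟩
  · apply summable_of_sum_range_le h1 (c := Dψ 0)
    intro T
    calc _ ≤ ∑ k ∈ Finset.range T, S k := by
          apply Finset.sum_le_sum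
          intro k _
          have := h2 k; have := h3 k
          simp only [hS]; linarith
      _ ≤ Dψ 0 := hbound T
  · apply summable_of_sum_range_le h2 (c := Dψ 0)
    intro T
    calc _ ≤ ∑ k ∈ Finset.range T, S k := by
          apply Finset.sum_le_sum
          intro k _
          have := h1 k; have := h3 k
          simp only [hS]; linarith
      _ ≤ Dψ 0 := hbound T
  · apply summable_of_sum_range_le h3 (c := Dψ 0)
    intro T
    calc _ ≤ ∑ k ∈ Finset.range T, S k := by
          apply Finset.sum_le_sum
          intro k _
          have := h1 k; have := h2 k
          simp only [hS]; linarith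
      _ ≤ Dψ 0 := hbound T
end
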